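/- arXiv:2511.02990 — 7 statements merged into one kernel-verified Lean document; each statement's English description precedes it below -/
import Mathlib

section
/- Let v be an inner vertex of a branch decomposition T with children v1 and v2. If Φ ∈ proj(v), then there exist Φ1 ∈ proj(v1) and Φ2 ∈ proj(v2) such that Φ^c = min{Φ1^c + Φ2^c, γ^c} for all c ∈ C̄_v. Conversely, for all Φ1 ∈ proj(v1) and Φ2 ∈ proj(v2) there is a unique Φ ∈ proj(v) such that Φ^c = min{Φ1^c + Φ2^c, γ^c} for all c ∈ C̄_v. -/
open Finset

/-- A (translated) separable system with variable type `V`, constraint type `C` and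
finite domain `D`.  The constraint set is `C = Cin ∪ Cge` (disjointly), where `Cin`
is the set of constraints of type `∈` (with target set `Γ c` whose largest element
is the threshold `γ c`) and `Cge` is the set of constraints of type `≥` (with
threshold `γ c`).  Every constraint `c` has nonnegative summands `g c x : D → ℕ`. -/
structure SepSystem (V C D : Type) where
  /-- the summand functions `g^c_x : D → ℤ≥0` -/
  g : C → V → D → ℕ
  /-- the thresholds `γ^c` -/
  γ : C → ℕ
  /-- the target sets `Γ^c` for constraints in `C^∈` -/
  Γ : C → Finset ℕ
  /-- the set of constraints of type `∈` -/
  Cin : Finset C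
  /-- the set of constraints of type `≥` -/
  Cge : Finset C
  /-- `C^∈` and `C^≥` are disjoint -/
  disj : Disjoint Cin Cge
  /-- every constraint is in `C^∈ ∪ C^≥` -/
  cover : ∀ c, c ∈ Cin ∨ c ∈ Cge
  /-- for `c ∈ C^∈`, `γ^c` belongs to `Γ^c` … -/
  gammaMem : ∀ c ∈ Cin, γ c ∈ Γ c
  /-- … and is its largest element -/
  gammaMax : ∀ c ∈ Cin, ∀ a ∈ Γ c, a ≤ γ c

namespace SepSystem

variable {V C D : Type} [DecidableEq V] [DecidableEq C] [Fintype V] [Fintype C]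

/-- The constraint bound `cb^c(τ)` of the assignment `τ` restricted to `X'`. -/
def cb (S : SepSystem V C D) (X' : Finset V) (τ : V → D) (c : C) : ℕ :=
  ∑ x ∈ X', S.g c x (τ x)

/-- The map `C'/τ` (for `τ` restricted to `X'`), encoded as the function `C → ℕ`
that vanishes outside `C'`. -/
def cdiv (S : SepSystem V C D) (C' : Finset C) (X' : Finset V) (τ : V → D) : C → ℕ :=
  fun c => if c ∈ C' then min (S.cb X' τ c) (S.γ c) else 0

/-- The projection `proj(C', X') = { C'/τ : τ : X' → D }`. -/
def proj (S : SepSystem V C D) (C' : Finset C) (X' : Finset V) : Set (C → ℕ) :=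
  { f | ∃ τ : V → D, f = S.cdiv C' X' τ }

end SepSystem

/-- Lemma: relation between `proj(v)`, `proj(v1)`, `proj(v2)` for an inner vertex `v`
with children `v1`, `v2`.  If `Φ ∈ proj(v)` then there are `Φ1 ∈ proj(v1)` and
`Φ2 ∈ proj(v2)` satisfying (L1); conversely for all `Φ1 ∈ proj(v1)`, `Φ2 ∈ proj(v2)`
there is a unique `Φ ∈ proj(v)` satisfying (L1). -/
theorem SepSystem.proj_node {V C D : Type} [DecidableEq V] [DecidableEq C]
    [Fintype V] [Fintype C] (S : SepSystem V C D)
    (Xv1 Xv2 : Finset V) (Cv1 Cv2 : Finset C)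
    (hX : Disjoint Xv1 Xv2) (hC : Disjoint Cv1 Cv2) :
    (∀ Φ ∈ S.proj (Cv1 ∪ Cv2)ᶜ (Xv1 ∪ Xv2),
      ∃ Φ1 ∈ S.proj Cv1ᶜ Xv1, ∃ Φ2 ∈ S.proj Cv2ᶜ Xv2,
        ∀ c ∈ (Cv1 ∪ Cv2)ᶜ, Φ c = min (Φ1 c + Φ2 c) (S.γ c)) ∧
    (∀ Φ1 ∈ S.proj Cv1ᶜ Xv1, ∀ Φ2 ∈ S.proj Cv2ᶜ Xv2,
      ∃! Φ, Φ ∈ S.proj (Cv1 ∪ Cv2)ᶜ (Xv1 ∪ Xv2) ∧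
        ∀ c ∈ (Cv1 ∪ Cv2)ᶜ, Φ c = min (Φ1 c + Φ2 c) (S.γ c)) := by
  have hmm : ∀ a b γ : ℕ, min (min a γ + min b γ) γ = min (a + b) γ := by
    intro a b γ; omega
  have hmem : ∀ c : C, c ∈ (Cv1 ∪ Cv2)ᶜ → c ∈ Cv1ᶜ ∧ c ∈ Cv2ᶜ := by
    intro c hc
    simp only [Finset.mem_compl, Finset.mem_union] at hc ⊢
    exact ⟨fun h => hc (Or.inl h), fun h => hc (Or.inr h)⟩
  have hcb : ∀ (τ : V → D) (c : C),
      S.cb (Xv1 ∪ Xv2) τ c = S.cb Xv1 τ c + S.cb Xv2 τ c := by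
    intro τ c; exact Finset.sum_union hX
  constructor
  · rintro Φ ⟨τ, rfl⟩
    refine ⟨S.cdiv Cv1ᶜ Xv1 τ, ⟨τ, rfl⟩, S.cdiv Cv2ᶜ Xv2 τ, ⟨τ, rfl⟩, ?_⟩
    intro c hc
    obtain ⟨h1, h2⟩ := hmem c hc
    simp only [SepSystem.cdiv, if_pos hc, if_pos h1, if_pos h2, hcb τ c, hmm]
  · rintro Φ1 ⟨τ1, rfl⟩ Φ2 ⟨τ2, rfl⟩
    set τ : V → D := fun x => if x ∈ Xv1 then τ1 x else τ2 x with hτ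
    have hcb1 : ∀ c, S.cb Xv1 τ c = S.cb Xv1 τ1 c := by
      intro c; apply Finset.sum_congr rfl; intro x hx; simp [hτ, hx]
    have hcb2 : ∀ c, S.cb Xv2 τ c = S.cb Xv2 τ2 c := by
      intro c; apply Finset.sum_congr rfl; intro x hx
      have : x ∉ Xv1 := Finset.disjoint_right.mp hX hx
      simp [hτ, this]
    have key : ∀ c ∈ (Cv1 ∪ Cv2)ᶜ,
        S.cdiv (Cv1 ∪ Cv2)ᶜ (Xv1 ∪ Xv2) τ c
          = min (S.cdiv Cv1ᶜ Xv1 τ1 c + S.cdiv Cv2ᶜ Xv2 τ2 c) (S.γ c) := by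
      intro c hc
      obtain ⟨h1, h2⟩ := hmem c hc
      simp only [SepSystem.cdiv, if_pos hc, if_pos h1, if_pos h2, hcb τ c,
        hcb1, hcb2, hmm]
    refine ⟨S.cdiv (Cv1 ∪ Cv2)ᶜ (Xv1 ∪ Xv2) τ, ⟨⟨τ, rfl⟩, key⟩, ?_⟩
    rintro Φ ⟨⟨σ, rfl⟩, hΦ⟩
    funext c
    by_cases hc : c ∈ (Cv1 ∪ Cv2)ᶜ
    · rw [hΦ c hc, key c hc]
    · simp only [SepSystem.cdiv, if_neg hc]
end

section
/- Let v be an inner vertex of a branch decomposition T with children v1 and v2. If Ψ1 ∈ proj(v̄1), then there exist Ψ ∈ proj(v̄) and Φ2 ∈ proj(v2) such that Ψ1^c = min{Ψ^c + Φ2^c, γ^c} for all c ∈ C_{v1}. Conversely, for all Ψ ∈ proj(v̄) and Φ2 ∈ proj(v2) there is a unique Ψ1 ∈ proj(v̄1) such that Ψ1^c = min{Ψ^c + Φ2^c, γ^c} for all c ∈ C_{v1}. -/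
open Finset

lemma SepSystem.cb_split {V C D : Type} [DecidableEq V] [DecidableEq C]
    [Fintype V] [Fintype C] (S : SepSystem V C D)
    (Xv1 Xv2 : Finset V) (hX : Disjoint Xv1 Xv2) (τ : V → D) (c : C) :
    S.cb Xv1ᶜ τ c = S.cb (Xv1 ∪ Xv2)ᶜ τ c + S.cb Xv2 τ c := by
  unfold SepSystem.cb
  rw [← Finset.sum_union (by
    simp only [Finset.disjoint_left, Finset.mem_compl, Finset.mem_union]
    tauto)]
  congr 1
  ext x
  have hxx : x ∈ Xv1 → x ∉ Xv2 := fun h => Finset.disjoint_left.mp hX h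
  simp only [Finset.mem_union, Finset.mem_compl, Finset.mem_union]
  tauto

/-- Lemma: relation between `proj(v̄1)`, `proj(v̄)`, `proj(v2)` for an inner vertex `v`
with children `v1`, `v2`.  If `Ψ1 ∈ proj(v̄1)` then there are `Ψ ∈ proj(v̄)` and
`Φ2 ∈ proj(v2)` satisfying (L2); conversely for all `Ψ ∈ proj(v̄)`, `Φ2 ∈ proj(v2)`
there is a unique `Ψ1 ∈ proj(v̄1)` satisfying (L2). -/
theorem SepSystem.proj_node_bar {V C D : Type} [DecidableEq V] [DecidableEq C]
    [Fintype V] [Fintype C] (S : SepSystem V C D)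
    (Xv1 Xv2 : Finset V) (Cv1 Cv2 : Finset C)
    (hX : Disjoint Xv1 Xv2) (hC : Disjoint Cv1 Cv2) :
    (∀ Ψ1 ∈ S.proj Cv1 Xv1ᶜ,
      ∃ Ψ ∈ S.proj (Cv1 ∪ Cv2) (Xv1 ∪ Xv2)ᶜ, ∃ Φ2 ∈ S.proj Cv2ᶜ Xv2,
        ∀ c ∈ Cv1, Ψ1 c = min (Ψ c + Φ2 c) (S.γ c)) ∧
    (∀ Ψ ∈ S.proj (Cv1 ∪ Cv2) (Xv1 ∪ Xv2)ᶜ, ∀ Φ2 ∈ S.proj Cv2ᶜ Xv2,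
      ∃! Ψ1, Ψ1 ∈ S.proj Cv1 Xv1ᶜ ∧
        ∀ c ∈ Cv1, Ψ1 c = min (Ψ c + Φ2 c) (S.γ c)) := by
  constructor
  · rintro Ψ1 ⟨τ, rfl⟩
    refine ⟨S.cdiv (Cv1 ∪ Cv2) (Xv1 ∪ Xv2)ᶜ τ, ⟨τ, rfl⟩, S.cdiv Cv2ᶜ Xv2 τ, ⟨τ, rfl⟩, ?_⟩
    intro c hc
    have hc2 : c ∉ Cv2 := Finset.disjoint_left.mp hC hc
    have hsplit := S.cb_split Xv1 Xv2 hX τ c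
    rw [Finset.compl_union] at hsplit
    simp [SepSystem.cdiv, hc, hc2]
    omega
  · rintro Ψ ⟨τ, rfl⟩ Φ2 ⟨σ, rfl⟩
    set τ' : V → D := fun x => if x ∈ Xv2 then σ x else τ x with hτ'
    have key : ∀ c ∈ Cv1, S.cdiv Cv1 Xv1ᶜ τ' c =
        min (S.cdiv (Cv1 ∪ Cv2) (Xv1 ∪ Xv2)ᶜ τ c + S.cdiv Cv2ᶜ Xv2 σ c) (S.γ c) := by
      intro c hc
      have hc2 : c ∉ Cv2 := Finset.disjoint_left.mp hC hc
      have hsplit := S.cb_split Xv1 Xv2 hX τ' c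
      rw [Finset.compl_union] at hsplit
      simp [SepSystem.cdiv, hc, hc2]
      have h1 : S.cb (Xv1ᶜ ∩ Xv2ᶜ) τ' c = S.cb (Xv1ᶜ ∩ Xv2ᶜ) τ c := by
        unfold SepSystem.cb
        refine Finset.sum_congr rfl fun x hx => ?_
        simp only [Finset.mem_inter, Finset.mem_compl] at hx
        simp [hτ', hx.2]
      have h2 : S.cb Xv2 τ' c = S.cb Xv2 σ c := by
        unfold SepSystem.cb
        refine Finset.sum_congr rfl fun x hx => ?_
        simp [hτ', hx]
      omega
    refine ⟨S.cdiv Cv1 Xv1ᶜ τ', ⟨⟨τ', rfl⟩, key⟩, ?_⟩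
    rintro Ψ1 ⟨⟨ρ, rfl⟩, hρ⟩
    funext c
    by_cases hc : c ∈ Cv1
    · rw [hρ c hc, key c hc]
    · simp [SepSystem.cdiv, hc]
end

section
/- Let v be an inner vertex of a branch decomposition T with children v1 and v2, and let (Φ,Ψ), (Φ1,Ψ1), (Φ2,Ψ2) be linked shapes for v, v1, v2. If τ1 : X_{v1} → D has shape (Φ1,Ψ1) and τ2 : X_{v2} → D has shape (Φ2,Ψ2), then τ := τ1 ∪ τ2 : X_v → D has shape (Φ,Ψ). -/
open Finset

namespace SepSystem

variable {V C D : Type} [DecidableEq V] [DecidableEq C] [Fintype V] [Fintype C]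

/-- `τ` (restricted to `X_v`) has shape `(Φ, Ψ)` at a vertex `v` with variables `Xv`
and constraints `Cv`: conditions (S1), (S1*), (S2∈), (S2≥). -/
def HasShape (S : SepSystem V C D) (Xv : Finset V) (Cv : Finset C)
    (Φ Ψ : C → ℕ) (τ : V → D) : Prop :=
  (∀ c ∈ Cvᶜ, Φ c = min (S.cb Xv τ c) (S.γ c)) ∧
  (∀ c ∈ Cvᶜ ∩ S.Cin, S.cb Xv τ c ≤ S.γ c) ∧
  (∀ c ∈ Cv ∩ S.Cin, Ψ c + S.cb Xv τ c ∈ S.Γ c) ∧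
  (∀ c ∈ Cv ∩ S.Cge, S.γ c ≤ Ψ c + S.cb Xv τ c)

end SepSystem
namespace SepSystem

variable {V C D : Type} [DecidableEq V] [DecidableEq C] [Fintype V] [Fintype C]

/-- `(Φ,Ψ)`, `(Φ1,Ψ1)`, `(Φ2,Ψ2)` are linked shapes for an inner vertex `v`
(variables `Xv1 ∪ Xv2`, constraints `Cv1 ∪ Cv2`) with children `v1` and `v2`:
they are shapes, they satisfy (L1*), (L2*), (L3*) and the equations (L1), (L2), (L3). -/
def Linked (S : SepSystem V C D) (Xv1 Xv2 : Finset V) (Cv1 Cv2 : Finset C)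
    (Φ Ψ Φ1 Ψ1 Φ2 Ψ2 : C → ℕ) : Prop :=
  Ψ ∈ S.proj (Cv1 ∪ Cv2) (Xv1 ∪ Xv2)ᶜ ∧
  Φ1 ∈ S.proj Cv1ᶜ Xv1 ∧
  Φ2 ∈ S.proj Cv2ᶜ Xv2 ∧
  Φ ∈ S.proj (Cv1 ∪ Cv2)ᶜ (Xv1 ∪ Xv2) ∧
  Ψ1 ∈ S.proj Cv1 Xv1ᶜ ∧
  Ψ2 ∈ S.proj Cv2 Xv2ᶜ ∧
  (∀ c ∈ (Cv1 ∪ Cv2)ᶜ ∩ S.Cin, Φ1 c + Φ2 c ≤ S.γ c) ∧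
  (∀ c ∈ Cv1 ∩ S.Cin, Ψ c + Φ2 c ≤ S.γ c) ∧
  (∀ c ∈ Cv2 ∩ S.Cin, Ψ c + Φ1 c ≤ S.γ c) ∧
  (∀ c ∈ (Cv1 ∪ Cv2)ᶜ, Φ c = min (Φ1 c + Φ2 c) (S.γ c)) ∧
  (∀ c ∈ Cv1, Ψ1 c = min (Ψ c + Φ2 c) (S.γ c)) ∧
  (∀ c ∈ Cv2, Ψ2 c = min (Ψ c + Φ1 c) (S.γ c))

end SepSystem

/-- Lemma (from children to parent): if `(Φ,Ψ)`, `(Φ1,Ψ1)`, `(Φ2,Ψ2)` are linked shapes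
for an inner vertex `v` and its children `v1`, `v2`, and `τ1 : X_{v1} → D` has shape
`(Φ1,Ψ1)` and `τ2 : X_{v2} → D` has shape `(Φ2,Ψ2)`, then `τ = τ1 ∪ τ2` has
shape `(Φ,Ψ)`. -/
theorem SepSystem.hasShape_union {V C D : Type} [DecidableEq V] [DecidableEq C]
    [Fintype V] [Fintype C] (S : SepSystem V C D)
    (Xv1 Xv2 : Finset V) (Cv1 Cv2 : Finset C)
    (hX : Disjoint Xv1 Xv2) (hC : Disjoint Cv1 Cv2)
    (Φ Ψ Φ1 Ψ1 Φ2 Ψ2 : C → ℕ)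
    (hlink : S.Linked Xv1 Xv2 Cv1 Cv2 Φ Ψ Φ1 Ψ1 Φ2 Ψ2)
    (τ1 τ2 τ : V → D)
    (h1 : ∀ x ∈ Xv1, τ x = τ1 x) (h2 : ∀ x ∈ Xv2, τ x = τ2 x)
    (hs1 : S.HasShape Xv1 Cv1 Φ1 Ψ1 τ1) (hs2 : S.HasShape Xv2 Cv2 Φ2 Ψ2 τ2) :
    S.HasShape (Xv1 ∪ Xv2) (Cv1 ∪ Cv2) Φ Ψ τ := by
  obtain ⟨hΨ, hΦ1m, hΦ2m, hΦm, hΨ1m, hΨ2m, hL1s, hL2s, hL3s, hL1, hL2, hL3⟩ := hlink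
  obtain ⟨h11, h12, h13, h14⟩ := hs1
  obtain ⟨h21, h22, h23, h24⟩ := hs2
  have hcb : ∀ c, S.cb (Xv1 ∪ Xv2) τ c = S.cb Xv1 τ1 c + S.cb Xv2 τ2 c := by
    intro c
    unfold cb
    rw [Finset.sum_union hX]
    congr 1
    · exact Finset.sum_congr rfl fun x hx => by rw [h1 x hx]
    · exact Finset.sum_congr rfl fun x hx => by rw [h2 x hx]
  refine ⟨?_, ?_, ?_, ?_⟩
  · intro c hc
    rw [Finset.mem_compl, Finset.mem_union] at hc
    push_neg at hc
    have e1 := h11 c (Finset.mem_compl.2 hc.1)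
    have e2 := h21 c (Finset.mem_compl.2 hc.2)
    have e := hL1 c (by simp [Finset.mem_compl, Finset.mem_union, hc.1, hc.2])
    rw [hcb, e, e1, e2]
    omega
  · intro c hc
    rw [Finset.mem_inter, Finset.mem_compl, Finset.mem_union] at hc
    push_neg at hc
    obtain ⟨⟨hc1, hc2⟩, hcin⟩ := hc
    have b1 := h12 c (by simp [hc1, hcin])
    have b2 := h22 c (by simp [hc2, hcin])
    have e1 := h11 c (Finset.mem_compl.2 hc1)
    have e2 := h21 c (Finset.mem_compl.2 hc2)
    have l := hL1s c (by simp [Finset.mem_compl, Finset.mem_union, hc1, hc2, hcin])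
    rw [hcb]
    omega
  · intro c hc
    rw [Finset.mem_inter, Finset.mem_union] at hc
    obtain ⟨hc12, hcin⟩ := hc
    rw [hcb]
    rcases hc12 with hc1 | hc2
    · have hnc2 : c ∉ Cv2 := Finset.disjoint_left.1 hC hc1
      have e2 := h21 c (Finset.mem_compl.2 hnc2)
      have b2 := h22 c (by simp [hnc2, hcin])
      have l := hL2 c hc1
      have ls := hL2s c (by simp [hc1, hcin])
      have s := h13 c (by simp [hc1, hcin])
      have heq : Ψ c + (S.cb Xv1 τ1 c + S.cb Xv2 τ2 c) = Ψ1 c + S.cb Xv1 τ1 c := by omega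
      rw [heq]; exact s
    · have hnc1 : c ∉ Cv1 := Finset.disjoint_right.1 hC hc2
      have e1 := h11 c (Finset.mem_compl.2 hnc1)
      have b1 := h12 c (by simp [hnc1, hcin])
      have l := hL3 c hc2
      have ls := hL3s c (by simp [hc2, hcin])
      have s := h23 c (by simp [hc2, hcin])
      have heq : Ψ c + (S.cb Xv1 τ1 c + S.cb Xv2 τ2 c) = Ψ2 c + S.cb Xv2 τ2 c := by omega
      rw [heq]; exact s
  · intro c hc
    rw [Finset.mem_inter, Finset.mem_union] at hc
    obtain ⟨hc12, hcge⟩ := hc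
    rw [hcb]
    rcases hc12 with hc1 | hc2
    · have hnc2 : c ∉ Cv2 := Finset.disjoint_left.1 hC hc1
      have e2 := h21 c (Finset.mem_compl.2 hnc2)
      have l := hL2 c hc1
      have s := h14 c (by simp [hc1, hcge])
      omega
    · have hnc1 : c ∉ Cv1 := Finset.disjoint_right.1 hC hc2
      have e1 := h11 c (Finset.mem_compl.2 hnc1)
      have l := hL3 c hc2
      have s := h24 c (by simp [hc2, hcge])
      omega
end

section
/- Let v be an inner vertex of a branch decomposition T with children v1 and v2, let (Φ,Ψ) be a shape for v, let τ : X_v → D have shape (Φ,Ψ), and let τ1, τ2 be the restrictions of τ to X_{v1}, X_{v2}. Then there is a unique pair of shapes (Φ1,Ψ1) for v1 and (Φ2,Ψ2) for v2 such that (Φ,Ψ), (Φ1,Ψ1), (Φ2,Ψ2) are linked shapes, τ1 has shape (Φ1,Ψ1), and τ2 has shape (Φ2,Ψ2). -/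
open Finset

/-- Lemma (from parent to children): if `(Φ,Ψ)` is a shape for an inner vertex `v` with
children `v1`, `v2` and `τ : X_v → D` has shape `(Φ,Ψ)`, then there is a unique pair of
shapes `((Φ1,Ψ1),(Φ2,Ψ2))` for `v1`, `v2` such that `(Φ,Ψ)`, `(Φ1,Ψ1)`, `(Φ2,Ψ2)` are
linked shapes and the restrictions `τ1`, `τ2` of `τ` have shapes `(Φ1,Ψ1)`, `(Φ2,Ψ2)`. -/
theorem SepSystem.unique_linked_of_hasShape {V C D : Type} [DecidableEq V] [DecidableEq C]
    [Fintype V] [Fintype C] (S : SepSystem V C D)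
    (Xv1 Xv2 : Finset V) (Cv1 Cv2 : Finset C)
    (hX : Disjoint Xv1 Xv2) (hC : Disjoint Cv1 Cv2)
    (Φ Ψ : C → ℕ)
    (hΦ : Φ ∈ S.proj (Cv1 ∪ Cv2)ᶜ (Xv1 ∪ Xv2))
    (hΨ : Ψ ∈ S.proj (Cv1 ∪ Cv2) (Xv1 ∪ Xv2)ᶜ)
    (τ : V → D)
    (hτ : S.HasShape (Xv1 ∪ Xv2) (Cv1 ∪ Cv2) Φ Ψ τ) :
    ∃! p : ((C → ℕ) × (C → ℕ)) × ((C → ℕ) × (C → ℕ)),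
      S.Linked Xv1 Xv2 Cv1 Cv2 Φ Ψ p.1.1 p.1.2 p.2.1 p.2.2 ∧
      S.HasShape Xv1 Cv1 p.1.1 p.1.2 τ ∧
      S.HasShape Xv2 Cv2 p.2.1 p.2.2 τ := by
  classical
  obtain ⟨σ, hσ⟩ := hΨ
  obtain ⟨hτ1, hτ2, hτ3, hτ4⟩ := hτ
  -- disjointness of constraint sets
  have hC12 : ∀ c ∈ Cv1, c ∉ Cv2 := fun c h => Finset.disjoint_left.mp hC h
  have hC21 : ∀ c ∈ Cv2, c ∉ Cv1 := fun c h => Finset.disjoint_right.mp hC h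
  -- additivity of cb over the disjoint union Xv1 ∪ Xv2
  have hab : ∀ c, S.cb (Xv1 ∪ Xv2) τ c = S.cb Xv1 τ c + S.cb Xv2 τ c := by
    intro c; exact Finset.sum_union hX
  -- value of Ψ on Cv1 ∪ Cv2
  have hΨval : ∀ c ∈ Cv1 ∪ Cv2, Ψ c = min (S.cb (Xv1 ∪ Xv2)ᶜ σ c) (S.γ c) := by
    intro c hc; rw [hσ]; simp [SepSystem.cdiv, hc]
  -- the combined assignments used for Ψ1, Ψ2
  set σ1 : V → D := fun x => if x ∈ Xv2 then τ x else σ x with hσ1def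
  set σ2 : V → D := fun x => if x ∈ Xv1 then τ x else σ x with hσ2def
  have hsplit1 : Xv1ᶜ = Xv2 ∪ (Xv1 ∪ Xv2)ᶜ := by
    ext x
    simp only [Finset.mem_compl, Finset.mem_union]
    have : x ∈ Xv1 → x ∉ Xv2 := fun h => Finset.disjoint_left.mp hX h
    tauto
  have hsplit2 : Xv2ᶜ = Xv1 ∪ (Xv1 ∪ Xv2)ᶜ := by
    ext x
    simp only [Finset.mem_compl, Finset.mem_union]
    have : x ∈ Xv1 → x ∉ Xv2 := fun h => Finset.disjoint_left.mp hX h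
    tauto
  have hdisj1 : Disjoint Xv2 (Xv1 ∪ Xv2)ᶜ :=
    Finset.disjoint_left.mpr fun x hx hx2 =>
      (Finset.mem_compl.mp hx2) (Finset.mem_union_right _ hx)
  have hdisj2 : Disjoint Xv1 (Xv1 ∪ Xv2)ᶜ :=
    Finset.disjoint_left.mpr fun x hx hx2 =>
      (Finset.mem_compl.mp hx2) (Finset.mem_union_left _ hx)
  have hcb1 : ∀ c, S.cb Xv1ᶜ σ1 c = S.cb Xv2 τ c + S.cb (Xv1 ∪ Xv2)ᶜ σ c := by
    intro c
    rw [show S.cb Xv1ᶜ σ1 c = ∑ x ∈ Xv1ᶜ, S.g c x (σ1 x) from rfl, hsplit1,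
      Finset.sum_union hdisj1]
    congr 1
    · exact Finset.sum_congr rfl fun x hx => by simp [hσ1def, hx]
    · refine Finset.sum_congr rfl fun x hx => ?_
      have hx2 : x ∉ Xv2 := fun h => (Finset.mem_compl.mp hx) (Finset.mem_union_right _ h)
      simp [hσ1def, hx2]
  have hcb2 : ∀ c, S.cb Xv2ᶜ σ2 c = S.cb Xv1 τ c + S.cb (Xv1 ∪ Xv2)ᶜ σ c := by
    intro c
    rw [show S.cb Xv2ᶜ σ2 c = ∑ x ∈ Xv2ᶜ, S.g c x (σ2 x) from rfl, hsplit2,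
      Finset.sum_union hdisj2]
    congr 1
    · exact Finset.sum_congr rfl fun x hx => by simp [hσ2def, hx]
    · refine Finset.sum_congr rfl fun x hx => ?_
      have hx1 : x ∉ Xv1 := fun h => (Finset.mem_compl.mp hx) (Finset.mem_union_left _ h)
      simp [hσ2def, hx1]
  -- the candidate shapes
  set Φ1 : C → ℕ := S.cdiv Cv1ᶜ Xv1 τ with hΦ1def
  set Φ2 : C → ℕ := S.cdiv Cv2ᶜ Xv2 τ with hΦ2def
  set Ψ1 : C → ℕ := S.cdiv Cv1 Xv1ᶜ σ1 with hΨ1def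
  set Ψ2 : C → ℕ := S.cdiv Cv2 Xv2ᶜ σ2 with hΨ2def
  -- value lemmas
  have vΦ1 : ∀ c, Φ1 c = if c ∈ Cv1 then 0 else min (S.cb Xv1 τ c) (S.γ c) := by
    intro c; by_cases h : c ∈ Cv1 <;> simp [hΦ1def, SepSystem.cdiv, h]
  have vΦ2 : ∀ c, Φ2 c = if c ∈ Cv2 then 0 else min (S.cb Xv2 τ c) (S.γ c) := by
    intro c; by_cases h : c ∈ Cv2 <;> simp [hΦ2def, SepSystem.cdiv, h]
  have vΨ1 : ∀ c, Ψ1 c =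
      if c ∈ Cv1 then min (S.cb Xv2 τ c + S.cb (Xv1 ∪ Xv2)ᶜ σ c) (S.γ c) else 0 := by
    intro c; by_cases h : c ∈ Cv1 <;> simp [hΨ1def, SepSystem.cdiv, h, hcb1 c]
  have vΨ2 : ∀ c, Ψ2 c =
      if c ∈ Cv2 then min (S.cb Xv1 τ c + S.cb (Xv1 ∪ Xv2)ᶜ σ c) (S.γ c) else 0 := by
    intro c; by_cases h : c ∈ Cv2 <;> simp [hΨ2def, SepSystem.cdiv, h, hcb2 c]
  -- consequences of hτ
  have h1 : ∀ c ∈ (Cv1 ∪ Cv2)ᶜ, Φ c = min (S.cb Xv1 τ c + S.cb Xv2 τ c) (S.γ c) := by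
    intro c hc; rw [hτ1 c hc, hab]
  have h2 : ∀ c ∈ (Cv1 ∪ Cv2)ᶜ ∩ S.Cin, S.cb Xv1 τ c + S.cb Xv2 τ c ≤ S.γ c := by
    intro c hc; have := hτ2 c hc; rwa [hab] at this
  have h3 : ∀ c ∈ (Cv1 ∪ Cv2) ∩ S.Cin,
      min (S.cb (Xv1 ∪ Xv2)ᶜ σ c) (S.γ c) + (S.cb Xv1 τ c + S.cb Xv2 τ c) ∈ S.Γ c := by
    intro c hc
    have hc1 := Finset.mem_inter.mp hc
    have := hτ3 c hc
    rwa [hab, hΨval c hc1.1] at this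
  have h3' : ∀ c ∈ (Cv1 ∪ Cv2) ∩ S.Cin,
      min (S.cb (Xv1 ∪ Xv2)ᶜ σ c) (S.γ c) + (S.cb Xv1 τ c + S.cb Xv2 τ c) ≤ S.γ c := by
    intro c hc
    exact S.gammaMax c (Finset.mem_inter.mp hc).2 _ (h3 c hc)
  have h4 : ∀ c ∈ (Cv1 ∪ Cv2) ∩ S.Cge,
      S.γ c ≤ min (S.cb (Xv1 ∪ Xv2)ᶜ σ c) (S.γ c) + (S.cb Xv1 τ c + S.cb Xv2 τ c) := by
    intro c hc
    have hc1 := Finset.mem_inter.mp hc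
    have := hτ4 c hc
    rwa [hab, hΨval c hc1.1] at this
  have hLinked : S.Linked Xv1 Xv2 Cv1 Cv2 Φ Ψ Φ1 Ψ1 Φ2 Ψ2 := by
    refine ⟨⟨σ, hσ⟩, ⟨τ, rfl⟩, ⟨τ, rfl⟩, hΦ, ⟨σ1, rfl⟩, ⟨σ2, rfl⟩, ?_, ?_, ?_, ?_, ?_, ?_⟩
    · -- (L1*)
      intro c hc
      have hcm := Finset.mem_inter.mp hc
      have hcc := Finset.mem_compl.mp hcm.1
      have hc1 : c ∉ Cv1 := fun h => hcc (Finset.mem_union_left _ h)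
      have hc2 : c ∉ Cv2 := fun h => hcc (Finset.mem_union_right _ h)
      have := h2 c hc
      rw [vΦ1 c, vΦ2 c, if_neg hc1, if_neg hc2]
      omega
    · -- (L2*)
      intro c hc
      have hcm := Finset.mem_inter.mp hc
      have hc2 : c ∉ Cv2 := hC12 c hcm.1
      have hc' : c ∈ (Cv1 ∪ Cv2) ∩ S.Cin :=
        Finset.mem_inter.mpr ⟨Finset.mem_union_left _ hcm.1, hcm.2⟩
      have := h3' c hc'
      rw [vΦ2 c, if_neg hc2, hΨval c (Finset.mem_union_left _ hcm.1)]
      omega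
    · -- (L3*)
      intro c hc
      have hcm := Finset.mem_inter.mp hc
      have hc1 : c ∉ Cv1 := hC21 c hcm.1
      have hc' : c ∈ (Cv1 ∪ Cv2) ∩ S.Cin :=
        Finset.mem_inter.mpr ⟨Finset.mem_union_right _ hcm.1, hcm.2⟩
      have := h3' c hc'
      rw [vΦ1 c, if_neg hc1, hΨval c (Finset.mem_union_right _ hcm.1)]
      omega
    · -- (L1)
      intro c hc
      have hcc := Finset.mem_compl.mp hc
      have hc1 : c ∉ Cv1 := fun h => hcc (Finset.mem_union_left _ h)
      have hc2 : c ∉ Cv2 := fun h => hcc (Finset.mem_union_right _ h)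
      rw [h1 c hc, vΦ1 c, vΦ2 c, if_neg hc1, if_neg hc2]
      omega
    · -- (L2)
      intro c hc
      have hc2 : c ∉ Cv2 := hC12 c hc
      rw [vΨ1 c, if_pos hc, vΦ2 c, if_neg hc2, hΨval c (Finset.mem_union_left _ hc)]
      omega
    · -- (L3)
      intro c hc
      have hc1 : c ∉ Cv1 := hC21 c hc
      rw [vΨ2 c, if_pos hc, vΦ1 c, if_neg hc1, hΨval c (Finset.mem_union_right _ hc)]
      omega
  have hH1 : S.HasShape Xv1 Cv1 Φ1 Ψ1 τ := by
    refine ⟨?_, ?_, ?_, ?_⟩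
    · intro c hc
      rw [vΦ1 c, if_neg (Finset.mem_compl.mp hc)]
    · intro c hc
      have hcm := Finset.mem_inter.mp hc
      have hc1 : c ∉ Cv1 := Finset.mem_compl.mp hcm.1
      by_cases hc2 : c ∈ Cv2
      · have := h3' c (Finset.mem_inter.mpr ⟨Finset.mem_union_right _ hc2, hcm.2⟩)
        omega
      · have hcc : c ∈ (Cv1 ∪ Cv2)ᶜ := by
          rw [Finset.mem_compl, Finset.mem_union]; tauto
        have := h2 c (Finset.mem_inter.mpr ⟨hcc, hcm.2⟩)
        omega
    · intro c hc
      have hcm := Finset.mem_inter.mp hc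
      have hc' : c ∈ (Cv1 ∪ Cv2) ∩ S.Cin :=
        Finset.mem_inter.mpr ⟨Finset.mem_union_left _ hcm.1, hcm.2⟩
      have key := h3 c hc'
      have key' := h3' c hc'
      rw [vΨ1 c, if_pos hcm.1]
      have : min (S.cb Xv2 τ c + S.cb (Xv1 ∪ Xv2)ᶜ σ c) (S.γ c) + S.cb Xv1 τ c =
          min (S.cb (Xv1 ∪ Xv2)ᶜ σ c) (S.γ c) + (S.cb Xv1 τ c + S.cb Xv2 τ c) := by
        omega
      rw [this]; exact key
    · intro c hc
      have hcm := Finset.mem_inter.mp hc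
      have := h4 c (Finset.mem_inter.mpr ⟨Finset.mem_union_left _ hcm.1, hcm.2⟩)
      rw [vΨ1 c, if_pos hcm.1]
      omega
  have hH2 : S.HasShape Xv2 Cv2 Φ2 Ψ2 τ := by
    refine ⟨?_, ?_, ?_, ?_⟩
    · intro c hc
      rw [vΦ2 c, if_neg (Finset.mem_compl.mp hc)]
    · intro c hc
      have hcm := Finset.mem_inter.mp hc
      have hc2 : c ∉ Cv2 := Finset.mem_compl.mp hcm.1
      by_cases hc1 : c ∈ Cv1
      · have := h3' c (Finset.mem_inter.mpr ⟨Finset.mem_union_left _ hc1, hcm.2⟩)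
        omega
      · have hcc : c ∈ (Cv1 ∪ Cv2)ᶜ := by
          rw [Finset.mem_compl, Finset.mem_union]; tauto
        have := h2 c (Finset.mem_inter.mpr ⟨hcc, hcm.2⟩)
        omega
    · intro c hc
      have hcm := Finset.mem_inter.mp hc
      have hc' : c ∈ (Cv1 ∪ Cv2) ∩ S.Cin :=
        Finset.mem_inter.mpr ⟨Finset.mem_union_right _ hcm.1, hcm.2⟩
      have key := h3 c hc'
      have key' := h3' c hc'
      rw [vΨ2 c, if_pos hcm.1]
      have : min (S.cb Xv1 τ c + S.cb (Xv1 ∪ Xv2)ᶜ σ c) (S.γ c) + S.cb Xv2 τ c =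
          min (S.cb (Xv1 ∪ Xv2)ᶜ σ c) (S.γ c) + (S.cb Xv1 τ c + S.cb Xv2 τ c) := by
        omega
      rw [this]; exact key
    · intro c hc
      have hcm := Finset.mem_inter.mp hc
      have := h4 c (Finset.mem_inter.mpr ⟨Finset.mem_union_right _ hcm.1, hcm.2⟩)
      rw [vΨ2 c, if_pos hcm.1]
      omega
  refine ⟨⟨⟨Φ1, Ψ1⟩, ⟨Φ2, Ψ2⟩⟩, ⟨hLinked, hH1, hH2⟩, ?_⟩
  · -- uniqueness
    rintro ⟨⟨Φ1', Ψ1'⟩, ⟨Φ2', Ψ2'⟩⟩ ⟨hL, hS1, hS2⟩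
    obtain ⟨-, ⟨ρ1, hρ1⟩, ⟨ρ2, hρ2⟩, -, ⟨π1, hπ1⟩, ⟨π2, hπ2⟩, -, -, -, -, hL2, hL3⟩ := hL
    dsimp only at hρ1 hρ2 hπ1 hπ2 hL2 hL3 hS1 hS2 ⊢
    have eΦ1 : Φ1' = Φ1 := by
      funext c
      by_cases h : c ∈ Cv1
      · rw [vΦ1 c, if_pos h, hρ1]
        simp [SepSystem.cdiv, h]
      · rw [vΦ1 c, if_neg h, hS1.1 c (Finset.mem_compl.mpr h)]
    have eΦ2 : Φ2' = Φ2 := by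
      funext c
      by_cases h : c ∈ Cv2
      · rw [vΦ2 c, if_pos h, hρ2]
        simp [SepSystem.cdiv, h]
      · rw [vΦ2 c, if_neg h, hS2.1 c (Finset.mem_compl.mpr h)]
    have eΨ1 : Ψ1' = Ψ1 := by
      funext c
      by_cases h : c ∈ Cv1
      · have hc2 : c ∉ Cv2 := hC12 c h
        rw [hL2 c h, eΦ2, vΨ1 c, if_pos h, vΦ2 c, if_neg hc2,
          hΨval c (Finset.mem_union_left _ h)]
        omega
      · rw [vΨ1 c, if_neg h, hπ1]
        simp [SepSystem.cdiv, h]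
    have eΨ2 : Ψ2' = Ψ2 := by
      funext c
      by_cases h : c ∈ Cv2
      · have hc1 : c ∉ Cv1 := hC21 c h
        rw [hL3 c h, eΦ1, vΨ2 c, if_pos h, vΦ1 c, if_neg hc1,
          hΨval c (Finset.mem_union_right _ h)]
        omega
      · rw [vΨ2 c, if_neg h, hπ2]
        simp [SepSystem.cdiv, h]
    simp [eΦ1, eΦ2, eΨ1, eΨ2]
end

section
/- Let v be an inner vertex of a branch decomposition T with children v1 and v2, let (Φ,Ψ) be a shape for v, and let P denote the set of pairs of shapes (Φ1,Ψ1) for v1 and (Φ2,Ψ2) for v2 such that (Φ,Ψ), (Φ1,Ψ1), (Φ2,Ψ2) are linked shapes. Then the set X̂_v(Φ,Ψ) of assignments from X_v to D of shape (Φ,Ψ) is the disjoint union, over all ((Φ1,Ψ1),(Φ2,Ψ2)) ∈ P, of the sets { τ1 ∪ τ2 : τ1 ∈ X̂_{v1}(Φ1,Ψ1), τ2 ∈ X̂_{v2}(Φ2,Ψ2) }. -/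
open Finset

namespace SepSystem

variable {V C D : Type} [DecidableEq V] [DecidableEq C] [Fintype V] [Fintype C]

/-- The set `{ τ1 ∪ τ2 : τ1 ∈ X̂_{v1}(Φ1,Ψ1), τ2 ∈ X̂_{v2}(Φ2,Ψ2) }` associated with a
pair of shapes `p = ((Φ1,Ψ1),(Φ2,Ψ2))` for the children `v1`, `v2`. -/
def combSet (S : SepSystem V C D) (Xv1 Xv2 : Finset V) (Cv1 Cv2 : Finset C)
    (p : ((C → ℕ) × (C → ℕ)) × ((C → ℕ) × (C → ℕ))) : Set (V → D) :=
  { τ | ∃ τ1 τ2 : V → D,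
      S.HasShape Xv1 Cv1 p.1.1 p.1.2 τ1 ∧ S.HasShape Xv2 Cv2 p.2.1 p.2.2 τ2 ∧
      (∀ x ∈ Xv1, τ x = τ1 x) ∧ (∀ x ∈ Xv2, τ x = τ2 x) }

end SepSystem


namespace SepSystem

variable {V C D : Type} [DecidableEq V] [DecidableEq C] [Fintype V] [Fintype C]

lemma cb_congr (S : SepSystem V C D) {X' : Finset V} {τ σ : V → D}
    (h : ∀ x ∈ X', τ x = σ x) (c : C) : S.cb X' τ c = S.cb X' σ c :=
  Finset.sum_congr rfl fun x hx => by rw [h x hx]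

lemma cb_union (S : SepSystem V C D) {X1 X2 : Finset V} (h : Disjoint X1 X2)
    (τ : V → D) (c : C) : S.cb (X1 ∪ X2) τ c = S.cb X1 τ c + S.cb X2 τ c :=
  Finset.sum_union h

end SepSystem

lemma aux_compl_split {α : Type} [DecidableEq α] [Fintype α] {s t : Finset α}
    (h : Disjoint s t) : sᶜ = t ∪ (s ∪ t)ᶜ := by
  ext x
  simp only [Finset.mem_compl, Finset.mem_union, not_or]
  have hx : x ∈ t → x ∉ s := fun hx => Finset.disjoint_right.mp h hx
  tauto

/-- Proposition: for an inner vertex `v` with children `v1`, `v2` and a shape `(Φ,Ψ)`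
for `v`, the set `X̂_v(Φ,Ψ)` of assignments of shape `(Φ,Ψ)` is the union, over all
pairs `P` of shapes for `v1`, `v2` forming with `(Φ,Ψ)` a triple of linked shapes, of
the sets `{τ1 ∪ τ2 : τ1 ∈ X̂_{v1}(Φ1,Ψ1), τ2 ∈ X̂_{v2}(Φ2,Ψ2)}`, and this union is
disjoint. -/
theorem SepSystem.shape_decomposition {V C D : Type} [DecidableEq V] [DecidableEq C]
    [Fintype V] [Fintype C] (S : SepSystem V C D)
    (Xv1 Xv2 : Finset V) (Cv1 Cv2 : Finset C)
    (hX : Disjoint Xv1 Xv2) (hC : Disjoint Cv1 Cv2)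
    (Φ Ψ : C → ℕ)
    (hΦ : Φ ∈ S.proj (Cv1 ∪ Cv2)ᶜ (Xv1 ∪ Xv2))
    (hΨ : Ψ ∈ S.proj (Cv1 ∪ Cv2) (Xv1 ∪ Xv2)ᶜ) :
    ({ τ : V → D | S.HasShape (Xv1 ∪ Xv2) (Cv1 ∪ Cv2) Φ Ψ τ } =
      ⋃ p ∈ { p : ((C → ℕ) × (C → ℕ)) × ((C → ℕ) × (C → ℕ)) |
          S.Linked Xv1 Xv2 Cv1 Cv2 Φ Ψ p.1.1 p.1.2 p.2.1 p.2.2 },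
        S.combSet Xv1 Xv2 Cv1 Cv2 p) ∧
    Set.PairwiseDisjoint
      { p : ((C → ℕ) × (C → ℕ)) × ((C → ℕ) × (C → ℕ)) |
          S.Linked Xv1 Xv2 Cv1 Cv2 Φ Ψ p.1.1 p.1.2 p.2.1 p.2.2 }
      (S.combSet Xv1 Xv2 Cv1 Cv2) := by
  obtain ⟨σ, hσ⟩ := hΨ
  have hXc1 : Xv1ᶜ = Xv2 ∪ (Xv1 ∪ Xv2)ᶜ := aux_compl_split hX
  have hXc2 : Xv2ᶜ = Xv1 ∪ (Xv1 ∪ Xv2)ᶜ := by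
    rw [aux_compl_split hX.symm, Finset.union_comm Xv2 Xv1]
  have hd1 : Disjoint Xv2 (Xv1 ∪ Xv2)ᶜ := Finset.disjoint_left.mpr
    fun x hx hx2 => (Finset.mem_compl.mp hx2) (Finset.mem_union_right _ hx)
  have hd2 : Disjoint Xv1 (Xv1 ∪ Xv2)ᶜ := Finset.disjoint_left.mpr
    fun x hx hx2 => (Finset.mem_compl.mp hx2) (Finset.mem_union_left _ hx)
  have hc12 : ∀ c ∈ Cv1, c ∈ Cv2ᶜ := fun c hc =>
    Finset.mem_compl.mpr (Finset.disjoint_left.mp hC hc)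
  have hc21 : ∀ c ∈ Cv2, c ∈ Cv1ᶜ := fun c hc =>
    Finset.mem_compl.mpr (Finset.disjoint_right.mp hC hc)
  have hΨval : ∀ c ∈ Cv1 ∪ Cv2, Ψ c = min (S.cb (Xv1 ∪ Xv2)ᶜ σ c) (S.γ c) := by
    intro c hc; rw [hσ]; simp [SepSystem.cdiv, hc]
  constructor
  · ext τ
    simp only [Set.mem_iUnion, Set.mem_setOf_eq]
    constructor
    · rintro ⟨h1, h1s, h2i, h2g⟩
      have hab : ∀ c, S.cb (Xv1 ∪ Xv2) τ c = S.cb Xv1 τ c + S.cb Xv2 τ c :=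
        fun c => S.cb_union hX τ c
      set σ1 : V → D := fun x => if x ∈ Xv2 then τ x else σ x with hσ1def
      set σ2 : V → D := fun x => if x ∈ Xv1 then τ x else σ x with hσ2def
      have hσ1cb : ∀ c, S.cb Xv1ᶜ σ1 c = S.cb Xv2 τ c + S.cb (Xv1 ∪ Xv2)ᶜ σ c := by
        intro c
        rw [hXc1, S.cb_union hd1]
        congr 1
        · exact (S.cb_congr (fun x hx => (if_pos hx : σ1 x = τ x)) c).symm ▸ rfl
        · refine S.cb_congr (fun x hx => ?_) c
          exact if_neg fun h2 => (Finset.mem_compl.mp hx) (Finset.mem_union_right _ h2)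
      have hσ2cb : ∀ c, S.cb Xv2ᶜ σ2 c = S.cb Xv1 τ c + S.cb (Xv1 ∪ Xv2)ᶜ σ c := by
        intro c
        rw [hXc2, S.cb_union hd2]
        congr 1
        · exact (S.cb_congr (fun x hx => (if_pos hx : σ2 x = τ x)) c).symm ▸ rfl
        · refine S.cb_congr (fun x hx => ?_) c
          exact if_neg fun h2 => (Finset.mem_compl.mp hx) (Finset.mem_union_left _ h2)
      refine ⟨((S.cdiv Cv1ᶜ Xv1 τ, S.cdiv Cv1 Xv1ᶜ σ1),
               (S.cdiv Cv2ᶜ Xv2 τ, S.cdiv Cv2 Xv2ᶜ σ2)),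
        ⟨⟨σ, hσ⟩, ⟨τ, rfl⟩, ⟨τ, rfl⟩, hΦ, ⟨σ1, rfl⟩, ⟨σ2, rfl⟩, ?_, ?_, ?_, ?_, ?_, ?_⟩,
        τ, τ, ⟨?_, ?_, ?_, ?_⟩, ⟨?_, ?_, ?_, ?_⟩, fun _ _ => rfl, fun _ _ => rfl⟩
      -- (L1*)
      · intro c hc
        rw [Finset.mem_inter] at hc
        have hnc1 : c ∈ Cv1ᶜ := Finset.mem_compl.mpr fun h =>
          (Finset.mem_compl.mp hc.1) (Finset.mem_union_left _ h)
        have hnc2 : c ∈ Cv2ᶜ := Finset.mem_compl.mpr fun h =>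
          (Finset.mem_compl.mp hc.1) (Finset.mem_union_right _ h)
        have h1c := h1s c (Finset.mem_inter.mpr ⟨hc.1, hc.2⟩)
        rw [hab c] at h1c
        simp only [SepSystem.cdiv, if_pos hnc1, if_pos hnc2]
        omega
      -- (L2*)
      · intro c hc
        rw [Finset.mem_inter] at hc
        have hm := h2i c (Finset.mem_inter.mpr ⟨Finset.mem_union_left _ hc.1, hc.2⟩)
        have hle := S.gammaMax c hc.2 _ hm
        rw [hab c] at hle
        simp only [SepSystem.cdiv, if_pos (hc12 c hc.1)]
        omega
      -- (L3*)
      · intro c hc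
        rw [Finset.mem_inter] at hc
        have hm := h2i c (Finset.mem_inter.mpr ⟨Finset.mem_union_right _ hc.1, hc.2⟩)
        have hle := S.gammaMax c hc.2 _ hm
        rw [hab c] at hle
        simp only [SepSystem.cdiv, if_pos (hc21 c hc.1)]
        omega
      -- (L1)
      · intro c hc
        have hnc1 : c ∈ Cv1ᶜ := Finset.mem_compl.mpr fun h =>
          (Finset.mem_compl.mp hc) (Finset.mem_union_left _ h)
        have hnc2 : c ∈ Cv2ᶜ := Finset.mem_compl.mpr fun h =>
          (Finset.mem_compl.mp hc) (Finset.mem_union_right _ h)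
        have h1c := h1 c hc
        rw [hab c] at h1c
        simp only [SepSystem.cdiv, if_pos hnc1, if_pos hnc2]
        omega
      -- (L2)
      · intro c hc
        have hΨc := hΨval c (Finset.mem_union_left _ hc)
        simp only [SepSystem.cdiv, if_pos hc, if_pos (hc12 c hc)]
        rw [hσ1cb c]
        omega
      -- (L3)
      · intro c hc
        have hΨc := hΨval c (Finset.mem_union_right _ hc)
        simp only [SepSystem.cdiv, if_pos hc, if_pos (hc21 c hc)]
        rw [hσ2cb c]
        omega
      -- HasShape at v1 : (S1)
      · intro c hc
        simp [SepSystem.cdiv, hc]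
      -- (S1*)
      · intro c hc
        rw [Finset.mem_inter] at hc
        by_cases hc2 : c ∈ Cv2
        · have hm := h2i c (Finset.mem_inter.mpr ⟨Finset.mem_union_right _ hc2, hc.2⟩)
          have hle := S.gammaMax c hc.2 _ hm
          rw [hab c] at hle
          omega
        · have hcc : c ∈ (Cv1 ∪ Cv2)ᶜ := by
            rw [Finset.mem_compl, Finset.mem_union]
            exact fun h => h.elim (Finset.mem_compl.mp hc.1) hc2
          have h1c := h1s c (Finset.mem_inter.mpr ⟨hcc, hc.2⟩)
          rw [hab c] at h1c
          omega
      -- (S2∈)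
      · intro c hc
        rw [Finset.mem_inter] at hc
        have hcu : c ∈ Cv1 ∪ Cv2 := Finset.mem_union_left _ hc.1
        have hm := h2i c (Finset.mem_inter.mpr ⟨hcu, hc.2⟩)
        have hle := S.gammaMax c hc.2 _ hm
        rw [hab c] at hle hm
        have hΨc := hΨval c hcu
        simp only [SepSystem.cdiv, if_pos hc.1]
        rw [hσ1cb c]
        have key : min (S.cb Xv2 τ c + S.cb (Xv1 ∪ Xv2)ᶜ σ c) (S.γ c) + S.cb Xv1 τ c
            = Ψ c + (S.cb Xv1 τ c + S.cb Xv2 τ c) := by omega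
        rw [key]
        exact hm
      -- (S2≥)
      · intro c hc
        rw [Finset.mem_inter] at hc
        have hcu : c ∈ Cv1 ∪ Cv2 := Finset.mem_union_left _ hc.1
        have hm := h2g c (Finset.mem_inter.mpr ⟨hcu, hc.2⟩)
        rw [hab c] at hm
        have hΨc := hΨval c hcu
        simp only [SepSystem.cdiv, if_pos hc.1]
        rw [hσ1cb c]
        omega
      -- HasShape at v2 : (S1)
      · intro c hc
        simp [SepSystem.cdiv, hc]
      -- (S1*)
      · intro c hc
        rw [Finset.mem_inter] at hc
        by_cases hc1 : c ∈ Cv1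
        · have hm := h2i c (Finset.mem_inter.mpr ⟨Finset.mem_union_left _ hc1, hc.2⟩)
          have hle := S.gammaMax c hc.2 _ hm
          rw [hab c] at hle
          omega
        · have hcc : c ∈ (Cv1 ∪ Cv2)ᶜ := by
            rw [Finset.mem_compl, Finset.mem_union]
            exact fun h => h.elim hc1 (Finset.mem_compl.mp hc.1)
          have h1c := h1s c (Finset.mem_inter.mpr ⟨hcc, hc.2⟩)
          rw [hab c] at h1c
          omega
      -- (S2∈)
      · intro c hc
        rw [Finset.mem_inter] at hc
        have hcu : c ∈ Cv1 ∪ Cv2 := Finset.mem_union_right _ hc.1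
        have hm := h2i c (Finset.mem_inter.mpr ⟨hcu, hc.2⟩)
        have hle := S.gammaMax c hc.2 _ hm
        rw [hab c] at hle hm
        have hΨc := hΨval c hcu
        simp only [SepSystem.cdiv, if_pos hc.1]
        rw [hσ2cb c]
        have key : min (S.cb Xv1 τ c + S.cb (Xv1 ∪ Xv2)ᶜ σ c) (S.γ c) + S.cb Xv2 τ c
            = Ψ c + (S.cb Xv1 τ c + S.cb Xv2 τ c) := by omega
        rw [key]
        exact hm
      -- (S2≥)
      · intro c hc
        rw [Finset.mem_inter] at hc
        have hcu : c ∈ Cv1 ∪ Cv2 := Finset.mem_union_right _ hc.1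
        have hm := h2g c (Finset.mem_inter.mpr ⟨hcu, hc.2⟩)
        rw [hab c] at hm
        have hΨc := hΨval c hcu
        simp only [SepSystem.cdiv, if_pos hc.1]
        rw [hσ2cb c]
        omega
    -- reverse inclusion
    · rintro ⟨⟨⟨Φ1, Ψ1⟩, ⟨Φ2, Ψ2⟩⟩, hp, τ1, τ2, hs1, hs2, ha1, ha2⟩
      dsimp only at hp hs1 hs2
      obtain ⟨-, -, -, -, -, -, L1s, L2s, L3s, L1, L2, L3⟩ := hp
      obtain ⟨hs1a, hs1b, hs1c, hs1d⟩ := hs1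
      obtain ⟨hs2a, hs2b, hs2c, hs2d⟩ := hs2
      have hab : ∀ c, S.cb (Xv1 ∪ Xv2) τ c = S.cb Xv1 τ1 c + S.cb Xv2 τ2 c := by
        intro c
        rw [S.cb_union hX, S.cb_congr ha1 c, S.cb_congr ha2 c]
      refine ⟨?_, ?_, ?_, ?_⟩
      · intro c hc
        have hnc1 : c ∈ Cv1ᶜ := Finset.mem_compl.mpr fun h =>
          (Finset.mem_compl.mp hc) (Finset.mem_union_left _ h)
        have hnc2 : c ∈ Cv2ᶜ := Finset.mem_compl.mpr fun h =>
          (Finset.mem_compl.mp hc) (Finset.mem_union_right _ h)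
        have h1 := L1 c hc
        have hΦ1 := hs1a c hnc1
        have hΦ2 := hs2a c hnc2
        rw [hab c]
        omega
      · intro c hc
        rw [Finset.mem_inter] at hc
        have hnc1 : c ∈ Cv1ᶜ := Finset.mem_compl.mpr fun h =>
          (Finset.mem_compl.mp hc.1) (Finset.mem_union_left _ h)
        have hnc2 : c ∈ Cv2ᶜ := Finset.mem_compl.mpr fun h =>
          (Finset.mem_compl.mp hc.1) (Finset.mem_union_right _ h)
        have h1 := L1s c (Finset.mem_inter.mpr ⟨hc.1, hc.2⟩)
        have hΦ1 := hs1a c hnc1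
        have hΦ2 := hs2a c hnc2
        have ha := hs1b c (Finset.mem_inter.mpr ⟨hnc1, hc.2⟩)
        have hb := hs2b c (Finset.mem_inter.mpr ⟨hnc2, hc.2⟩)
        rw [hab c]
        omega
      · intro c hc
        rw [Finset.mem_inter, Finset.mem_union] at hc
        rcases hc.1 with hc1 | hc2
        · have hnc2 : c ∈ Cv2ᶜ := hc12 c hc1
          have hm := hs1c c (Finset.mem_inter.mpr ⟨hc1, hc.2⟩)
          have hΨ1 := L2 c hc1
          have hΦ2 := hs2a c hnc2
          have hb2 := hs2b c (Finset.mem_inter.mpr ⟨hnc2, hc.2⟩)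
          have hle := L2s c (Finset.mem_inter.mpr ⟨hc1, hc.2⟩)
          have key : Ψ c + S.cb (Xv1 ∪ Xv2) τ c = Ψ1 c + S.cb Xv1 τ1 c := by
            rw [hab c]; omega
          rw [key]
          exact hm
        · have hnc1 : c ∈ Cv1ᶜ := hc21 c hc2
          have hm := hs2c c (Finset.mem_inter.mpr ⟨hc2, hc.2⟩)
          have hΨ2 := L3 c hc2
          have hΦ1 := hs1a c hnc1
          have ha1' := hs1b c (Finset.mem_inter.mpr ⟨hnc1, hc.2⟩)
          have hle := L3s c (Finset.mem_inter.mpr ⟨hc2, hc.2⟩)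
          have key : Ψ c + S.cb (Xv1 ∪ Xv2) τ c = Ψ2 c + S.cb Xv2 τ2 c := by
            rw [hab c]; omega
          rw [key]
          exact hm
      · intro c hc
        rw [Finset.mem_inter, Finset.mem_union] at hc
        rcases hc.1 with hc1 | hc2
        · have hnc2 : c ∈ Cv2ᶜ := hc12 c hc1
          have hm := hs1d c (Finset.mem_inter.mpr ⟨hc1, hc.2⟩)
          have hΨ1 := L2 c hc1
          have hΦ2 := hs2a c hnc2
          rw [hab c]
          omega
        · have hnc1 : c ∈ Cv1ᶜ := hc21 c hc2
          have hm := hs2d c (Finset.mem_inter.mpr ⟨hc2, hc.2⟩)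
          have hΨ2 := L3 c hc2
          have hΦ1 := hs1a c hnc1
          rw [hab c]
          omega
  -- disjointness
  · have key : ∀ p : ((C → ℕ) × (C → ℕ)) × ((C → ℕ) × (C → ℕ)),
        S.Linked Xv1 Xv2 Cv1 Cv2 Φ Ψ p.1.1 p.1.2 p.2.1 p.2.2 →
        ∀ τ ∈ S.combSet Xv1 Xv2 Cv1 Cv2 p,
        p = ((S.cdiv Cv1ᶜ Xv1 τ,
              fun c => if c ∈ Cv1 then min (Ψ c + S.cdiv Cv2ᶜ Xv2 τ c) (S.γ c) else 0),
             (S.cdiv Cv2ᶜ Xv2 τ,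
              fun c => if c ∈ Cv2 then min (Ψ c + S.cdiv Cv1ᶜ Xv1 τ c) (S.γ c) else 0)) := by
      rintro ⟨⟨Φ1, Ψ1⟩, ⟨Φ2, Ψ2⟩⟩ hp τ ⟨τ1, τ2, hs1, hs2, ha1, ha2⟩
      dsimp only at hp hs1 hs2 ⊢
      obtain ⟨-, ⟨ρ1, hρ1⟩, ⟨ρ2, hρ2⟩, -, ⟨π1, hπ1⟩, ⟨π2, hπ2⟩, -, -, -, -, L2, L3⟩ := hp
      have hΦ1 : Φ1 = S.cdiv Cv1ᶜ Xv1 τ := by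
        funext c
        by_cases hc : c ∈ Cv1ᶜ
        · rw [hs1.1 c hc]
          simp only [SepSystem.cdiv, if_pos hc]
          rw [S.cb_congr ha1 c]
        · rw [hρ1]
          simp [SepSystem.cdiv, hc]
      have hΦ2 : Φ2 = S.cdiv Cv2ᶜ Xv2 τ := by
        funext c
        by_cases hc : c ∈ Cv2ᶜ
        · rw [hs2.1 c hc]
          simp only [SepSystem.cdiv, if_pos hc]
          rw [S.cb_congr ha2 c]
        · rw [hρ2]
          simp [SepSystem.cdiv, hc]
      have hΨ1 : Ψ1 = fun c =>
          if c ∈ Cv1 then min (Ψ c + S.cdiv Cv2ᶜ Xv2 τ c) (S.γ c) else 0 := by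
        funext c
        by_cases hc : c ∈ Cv1
        · rw [L2 c hc, hΦ2, if_pos hc]
        · rw [hπ1, if_neg hc]
          simp [SepSystem.cdiv, hc]
      have hΨ2 : Ψ2 = fun c =>
          if c ∈ Cv2 then min (Ψ c + S.cdiv Cv1ᶜ Xv1 τ c) (S.γ c) else 0 := by
        funext c
        by_cases hc : c ∈ Cv2
        · rw [L3 c hc, hΦ1, if_pos hc]
        · rw [hπ2, if_neg hc]
          simp [SepSystem.cdiv, hc]
      rw [hΦ1, hΨ1, hΦ2, hΨ2]
    intro p hp q hq hne
    exact Set.disjoint_left.mpr fun {τ} hτp hτq =>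
      hne ((key p hp τ hτp).trans (key q hq τ hτq).symm)
end

section
/- Consider a separable system with C^∈ = ∅ and weights ω^c ∈ ℝ for every c ∈ C. Let v be an inner vertex of a branch decomposition T with children v1 and v2, let (Φ,Ψ), (Φ1,Ψ1), (Φ2,Ψ2) be linked shapes for v, v1, v2, let τ1 : X_{v1} → D have configuration Φ1 and τ2 : X_{v2} → D have configuration Φ2. Then ω^Ψ(τ1 ∪ τ2) = ω^{Ψ1}(τ1) + ω^{Ψ2}(τ2) + Σ_{c∈C_{v1}} ω^c · min{Φ2^c, γ^c − Ψ^c} + Σ_{c∈C_{v2}} ω^c · min{Φ1^c, γ^c − Ψ^c}. -/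
open Finset

/-- A (translated) separable system with `C^∈ = ∅`: all constraints are of type `≥`,
given by summands `g c x : D → ℕ` and thresholds `γ c`. -/
structure SepSystemGe (V C D : Type) where
  /-- the summand functions `g^c_x : D → ℤ≥0` -/
  g : C → V → D → ℕ
  /-- the thresholds `γ^c` -/
  γ : C → ℕ

namespace SepSystemGe

variable {V C D : Type} [DecidableEq V] [DecidableEq C] [Fintype V] [Fintype C]

/-- The constraint bound `cb^c(τ)` of the assignment `τ` restricted to `X'`. -/
def cb (S : SepSystemGe V C D) (X' : Finset V) (τ : V → D) (c : C) : ℕ :=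
  ∑ x ∈ X', S.g c x (τ x)

/-- The map `C'/τ` (for `τ` restricted to `X'`), encoded as the function `C → ℕ`
that vanishes outside `C'`. -/
def cdiv (S : SepSystemGe V C D) (C' : Finset C) (X' : Finset V) (τ : V → D) : C → ℕ :=
  fun c => if c ∈ C' then min (S.cb X' τ c) (S.γ c) else 0

/-- The projection `proj(C', X') = { C'/τ : τ : X' → D }`. -/
def proj (S : SepSystemGe V C D) (C' : Finset C) (X' : Finset V) : Set (C → ℕ) :=
  { f | ∃ τ : V → D, f = S.cdiv C' X' τ }

/-- `τ` (restricted to `X_v`) has configuration `Φ`, i.e. `Φ = C̄_v/τ`. -/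
def HasConfig (S : SepSystemGe V C D) (Xv : Finset V) (Cv : Finset C)
    (Φ : C → ℕ) (τ : V → D) : Prop :=
  Φ = S.cdiv Cvᶜ Xv τ

/-- The `Ψ`-weight `ω^Ψ(τ) = Σ_{c ∈ C_v} ω^c · min (cb^c(τ)) (γ^c - Ψ^c)`
(`min` taken in `ℤ`). -/
def wweight (S : SepSystemGe V C D) (ω : C → ℝ) (Xv : Finset V) (Cv : Finset C)
    (Ψ : C → ℕ) (τ : V → D) : ℝ :=
  ∑ c ∈ Cv, ω c * ((min (S.cb Xv τ c : ℤ) ((S.γ c : ℤ) - (Ψ c : ℤ)) : ℤ) : ℝ)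

/-- Linked shapes for an inner vertex with children `v1`, `v2` (here `C^∈ = ∅`, so a
triple of shapes is linked if the memberships and the equations (L1), (L2), (L3) hold). -/
def LinkedW (S : SepSystemGe V C D) (Xv1 Xv2 : Finset V) (Cv1 Cv2 : Finset C)
    (Φ Ψ Φ1 Ψ1 Φ2 Ψ2 : C → ℕ) : Prop :=
  Ψ ∈ S.proj (Cv1 ∪ Cv2) (Xv1 ∪ Xv2)ᶜ ∧
  Φ1 ∈ S.proj Cv1ᶜ Xv1 ∧
  Φ2 ∈ S.proj Cv2ᶜ Xv2 ∧
  Φ ∈ S.proj (Cv1 ∪ Cv2)ᶜ (Xv1 ∪ Xv2) ∧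
  Ψ1 ∈ S.proj Cv1 Xv1ᶜ ∧
  Ψ2 ∈ S.proj Cv2 Xv2ᶜ ∧
  (∀ c ∈ (Cv1 ∪ Cv2)ᶜ, Φ c = min (Φ1 c + Φ2 c) (S.γ c)) ∧
  (∀ c ∈ Cv1, Ψ1 c = min (Ψ c + Φ2 c) (S.γ c)) ∧
  (∀ c ∈ Cv2, Ψ2 c = min (Ψ c + Φ1 c) (S.γ c))

end SepSystemGe

/-- Lemma: for linked shapes `(Φ,Ψ)`, `(Φ1,Ψ1)`, `(Φ2,Ψ2)` at an inner vertex `v` with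
children `v1`, `v2`, and assignments `τ1` of configuration `Φ1`, `τ2` of configuration
`Φ2` with common extension `τ = τ1 ∪ τ2`:
`ω^Ψ(τ1 ∪ τ2) = ω^{Ψ1}(τ1) + ω^{Ψ2}(τ2) + Σ_{c ∈ C_{v1}} ω^c min (Φ2^c) (γ^c - Ψ^c)
 + Σ_{c ∈ C_{v2}} ω^c min (Φ1^c) (γ^c - Ψ^c)`. -/
theorem SepSystemGe.wweight_union {V C D : Type} [DecidableEq V] [DecidableEq C]
    [Fintype V] [Fintype C] (S : SepSystemGe V C D) (ω : C → ℝ)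
    (Xv1 Xv2 : Finset V) (Cv1 Cv2 : Finset C)
    (hX : Disjoint Xv1 Xv2) (hC : Disjoint Cv1 Cv2)
    (Φ Ψ Φ1 Ψ1 Φ2 Ψ2 : C → ℕ)
    (hlink : S.LinkedW Xv1 Xv2 Cv1 Cv2 Φ Ψ Φ1 Ψ1 Φ2 Ψ2)
    (τ1 τ2 τ : V → D)
    (h1 : ∀ x ∈ Xv1, τ x = τ1 x) (h2 : ∀ x ∈ Xv2, τ x = τ2 x)
    (hc1 : S.HasConfig Xv1 Cv1 Φ1 τ1) (hc2 : S.HasConfig Xv2 Cv2 Φ2 τ2) :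
    S.wweight ω (Xv1 ∪ Xv2) (Cv1 ∪ Cv2) Ψ τ =
      S.wweight ω Xv1 Cv1 Ψ1 τ1 + S.wweight ω Xv2 Cv2 Ψ2 τ2
      + ∑ c ∈ Cv1, ω c * ((min (Φ2 c : ℤ) ((S.γ c : ℤ) - (Ψ c : ℤ)) : ℤ) : ℝ)
      + ∑ c ∈ Cv2, ω c * ((min (Φ1 c : ℤ) ((S.γ c : ℤ) - (Ψ c : ℤ)) : ℤ) : ℝ) := by
  obtain ⟨⟨τΨ, hΨ⟩, -, -, -, -, -, -, hL2, hL3⟩ := hlink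
  have hΨle : ∀ c ∈ Cv1 ∪ Cv2, Ψ c ≤ S.γ c := by
    intro c hc
    rw [hΨ]
    simp [SepSystemGe.cdiv, hc]
  have hcb : ∀ c, S.cb (Xv1 ∪ Xv2) τ c = S.cb Xv1 τ1 c + S.cb Xv2 τ2 c := by
    intro c
    rw [SepSystemGe.cb, Finset.sum_union hX, SepSystemGe.cb, SepSystemGe.cb]
    congr 1
    · exact Finset.sum_congr rfl fun x hx => by rw [h1 x hx]
    · exact Finset.sum_congr rfl fun x hx => by rw [h2 x hx]
  have hΦ2 : ∀ c ∈ Cv1, Φ2 c = min (S.cb Xv2 τ2 c) (S.γ c) := by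
    intro c hc
    rw [hc2]
    simp [SepSystemGe.cdiv, Finset.disjoint_left.mp hC hc]
  have hΦ1 : ∀ c ∈ Cv2, Φ1 c = min (S.cb Xv1 τ1 c) (S.γ c) := by
    intro c hc
    rw [hc1]
    simp [SepSystemGe.cdiv, Finset.disjoint_right.mp hC hc]
  have key1 : ∀ c ∈ Cv1,
      ω c * ((min (S.cb (Xv1 ∪ Xv2) τ c : ℤ) ((S.γ c : ℤ) - (Ψ c : ℤ)) : ℤ) : ℝ)
      = ω c * ((min (S.cb Xv1 τ1 c : ℤ) ((S.γ c : ℤ) - (Ψ1 c : ℤ)) : ℤ) : ℝ)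
        + ω c * ((min (Φ2 c : ℤ) ((S.γ c : ℤ) - (Ψ c : ℤ)) : ℤ) : ℝ) := by
    intro c hc
    rw [← mul_add, ← Int.cast_add]
    congr 2
    have e1 := hΨle c (Finset.mem_union_left _ hc)
    have e2 := hΦ2 c hc
    have e3 := hL2 c hc
    have e4 := hcb c
    omega
  have key2 : ∀ c ∈ Cv2,
      ω c * ((min (S.cb (Xv1 ∪ Xv2) τ c : ℤ) ((S.γ c : ℤ) - (Ψ c : ℤ)) : ℤ) : ℝ)
      = ω c * ((min (S.cb Xv2 τ2 c : ℤ) ((S.γ c : ℤ) - (Ψ2 c : ℤ)) : ℤ) : ℝ)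
        + ω c * ((min (Φ1 c : ℤ) ((S.γ c : ℤ) - (Ψ c : ℤ)) : ℤ) : ℝ) := by
    intro c hc
    rw [← mul_add, ← Int.cast_add]
    congr 2
    have e1 := hΨle c (Finset.mem_union_right _ hc)
    have e2 := hΦ1 c hc
    have e3 := hL3 c hc
    have e4 := hcb c
    omega
  rw [SepSystemGe.wweight, Finset.sum_union hC, Finset.sum_congr rfl key1,
    Finset.sum_congr rfl key2, Finset.sum_add_distrib, Finset.sum_add_distrib,
    SepSystemGe.wweight, SepSystemGe.wweight]
  ring
end

section
/- Consider a separable system with C^∈ = ∅ and weights ω^c ∈ ℝ for every c ∈ C. Let v be an inner vertex of a branch decomposition T with children v1 and v2, let (Φ,Ψ), (Φ1,Ψ1), (Φ2,Ψ2) be linked shapes for v, v1, v2, let τ1, τ1' : X_{v1} → D have configuration Φ1 and τ2, τ2' : X_{v2} → D have configuration Φ2. If ω^{Ψ1}(τ1') ≤ ω^{Ψ1}(τ1) and ω^{Ψ2}(τ2') ≤ ω^{Ψ2}(τ2), then ω^Ψ(τ1' ∪ τ2') ≤ ω^Ψ(τ1 ∪ τ2). -/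
open Finset

private lemma key_min (a b γ ψ : ℕ) :
    min ((a:ℤ)+b) ((γ:ℤ)-ψ)
      = min (a:ℤ) ((γ:ℤ) - ((min (ψ + min b γ) γ : ℕ) : ℤ))
        + min (((min b γ : ℕ)) : ℤ) ((γ:ℤ)-ψ) := by
  push_cast
  omega

section aux
variable {V C D : Type} [DecidableEq V] [DecidableEq C] [Fintype V] [Fintype C]

lemma SepSystemGe.sum_part (S : SepSystemGe V C D) (ω : C → ℝ)
    (XA XB : Finset V) (CA : Finset C) (hX : Disjoint XA XB)
    (Ψ Ψ1 Φ2 : C → ℕ) (τ τA τB : V → D)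
    (hA : ∀ x ∈ XA, τ x = τA x) (hB : ∀ x ∈ XB, τ x = τB x)
    (hΦ2 : ∀ c ∈ CA, Φ2 c = min (S.cb XB τB c) (S.γ c))
    (hΨ1 : ∀ c ∈ CA, Ψ1 c = min (Ψ c + Φ2 c) (S.γ c)) :
    ∑ c ∈ CA, ω c * ((min ((S.cb (XA ∪ XB) τ c : ℤ)) ((S.γ c : ℤ) - (Ψ c : ℤ)) : ℤ) : ℝ)
      = S.wweight ω XA CA Ψ1 τA
        + ∑ c ∈ CA, ω c * ((min ((Φ2 c : ℤ)) ((S.γ c : ℤ) - (Ψ c : ℤ)) : ℤ) : ℝ) := by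
  unfold SepSystemGe.wweight
  rw [← Finset.sum_add_distrib]
  refine Finset.sum_congr rfl fun c hc => ?_
  rw [← mul_add]
  congr 1
  have hcb : S.cb (XA ∪ XB) τ c = S.cb XA τA c + S.cb XB τB c := by
    unfold SepSystemGe.cb
    rw [Finset.sum_union hX]
    congr 1
    · exact Finset.sum_congr rfl fun x hx => by rw [hA x hx]
    · exact Finset.sum_congr rfl fun x hx => by rw [hB x hx]
  rw [hcb, hΨ1 c hc, hΦ2 c hc]
  rw [← Int.cast_add, Int.cast_inj]
  have := key_min (S.cb XA τA c) (S.cb XB τB c) (S.γ c) (Ψ c)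
  push_cast at this ⊢
  omega

end aux


/-- Lemma: for linked shapes `(Φ,Ψ)`, `(Φ1,Ψ1)`, `(Φ2,Ψ2)` at an inner vertex `v` with
children `v1`, `v2`, if `τ1, τ1'` have configuration `Φ1` and `τ2, τ2'` have
configuration `Φ2`, and `ω^{Ψ1}(τ1') ≤ ω^{Ψ1}(τ1)` and `ω^{Ψ2}(τ2') ≤ ω^{Ψ2}(τ2)`,
then `ω^Ψ(τ1' ∪ τ2') ≤ ω^Ψ(τ1 ∪ τ2)`. -/
theorem SepSystemGe.wweight_union_mono {V C D : Type} [DecidableEq V] [DecidableEq C]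
    [Fintype V] [Fintype C] (S : SepSystemGe V C D) (ω : C → ℝ)
    (Xv1 Xv2 : Finset V) (Cv1 Cv2 : Finset C)
    (hX : Disjoint Xv1 Xv2) (hC : Disjoint Cv1 Cv2)
    (Φ Ψ Φ1 Ψ1 Φ2 Ψ2 : C → ℕ)
    (hlink : S.LinkedW Xv1 Xv2 Cv1 Cv2 Φ Ψ Φ1 Ψ1 Φ2 Ψ2)
    (τ1 τ1' τ2 τ2' τ τ' : V → D)
    (h1 : ∀ x ∈ Xv1, τ x = τ1 x) (h2 : ∀ x ∈ Xv2, τ x = τ2 x)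
    (h1' : ∀ x ∈ Xv1, τ' x = τ1' x) (h2' : ∀ x ∈ Xv2, τ' x = τ2' x)
    (hc1 : S.HasConfig Xv1 Cv1 Φ1 τ1) (hc2 : S.HasConfig Xv2 Cv2 Φ2 τ2)
    (hc1' : S.HasConfig Xv1 Cv1 Φ1 τ1') (hc2' : S.HasConfig Xv2 Cv2 Φ2 τ2')
    (hw1 : S.wweight ω Xv1 Cv1 Ψ1 τ1' ≤ S.wweight ω Xv1 Cv1 Ψ1 τ1)
    (hw2 : S.wweight ω Xv2 Cv2 Ψ2 τ2' ≤ S.wweight ω Xv2 Cv2 Ψ2 τ2) :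
    S.wweight ω (Xv1 ∪ Xv2) (Cv1 ∪ Cv2) Ψ τ' ≤
      S.wweight ω (Xv1 ∪ Xv2) (Cv1 ∪ Cv2) Ψ τ := by
  obtain ⟨-, -, -, -, -, -, -, hL2, hL3⟩ := hlink
  -- extract pointwise configs
  have hΦ2 : ∀ c ∈ Cv1, Φ2 c = min (S.cb Xv2 τ2 c) (S.γ c) := fun c hc => by
    rw [hc2]; simp [SepSystemGe.cdiv, Finset.disjoint_left.mp hC hc]
  have hΦ2' : ∀ c ∈ Cv1, Φ2 c = min (S.cb Xv2 τ2' c) (S.γ c) := fun c hc => by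
    rw [hc2']; simp [SepSystemGe.cdiv, Finset.disjoint_left.mp hC hc]
  have hΦ1 : ∀ c ∈ Cv2, Φ1 c = min (S.cb Xv1 τ1 c) (S.γ c) := fun c hc => by
    rw [hc1]; simp [SepSystemGe.cdiv, Finset.disjoint_right.mp hC hc]
  have hΦ1' : ∀ c ∈ Cv2, Φ1 c = min (S.cb Xv1 τ1' c) (S.γ c) := fun c hc => by
    rw [hc1']; simp [SepSystemGe.cdiv, Finset.disjoint_right.mp hC hc]
  have hL3' : ∀ c ∈ Cv2, Ψ2 c = min (Ψ c + Φ1 c) (S.γ c) := hL3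
  have hcomm : Xv1 ∪ Xv2 = Xv2 ∪ Xv1 := Finset.union_comm _ _
  have split : ∀ (σ σ1 σ2 : V → D), (∀ x ∈ Xv1, σ x = σ1 x) → (∀ x ∈ Xv2, σ x = σ2 x) →
      (∀ c ∈ Cv1, Φ2 c = min (S.cb Xv2 σ2 c) (S.γ c)) →
      (∀ c ∈ Cv2, Φ1 c = min (S.cb Xv1 σ1 c) (S.γ c)) →
      S.wweight ω (Xv1 ∪ Xv2) (Cv1 ∪ Cv2) Ψ σ
        = S.wweight ω Xv1 Cv1 Ψ1 σ1 + S.wweight ω Xv2 Cv2 Ψ2 σ2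
          + (∑ c ∈ Cv1, ω c * ((min ((Φ2 c : ℤ)) ((S.γ c : ℤ) - (Ψ c : ℤ)) : ℤ) : ℝ)
             + ∑ c ∈ Cv2, ω c * ((min ((Φ1 c : ℤ)) ((S.γ c : ℤ) - (Ψ c : ℤ)) : ℤ) : ℝ)) := by
    intro σ σ1 σ2 hs1 hs2 hp2 hp1
    unfold SepSystemGe.wweight
    rw [Finset.sum_union hC]
    have e1 := S.sum_part ω Xv1 Xv2 Cv1 hX Ψ Ψ1 Φ2 σ σ1 σ2 hs1 hs2 hp2 hL2
    have e2 := S.sum_part ω Xv2 Xv1 Cv2 hX.symm Ψ Ψ2 Φ1 σ σ2 σ1 hs2 hs1 hp1 hL3'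
    rw [← hcomm] at e2
    rw [e1, e2]
    unfold SepSystemGe.wweight
    ring
  rw [split τ τ1 τ2 h1 h2 hΦ2 hΦ1, split τ' τ1' τ2' h1' h2' hΦ2' hΦ1']
  linarith
end
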